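/- Let w[a..b] and w[c..d] be palindromic factors of a word w with (a+b)/2 < (c+d)/2, which intersect (a ≤ c ≤ b ≤ d), with neither a proper factor of the other. Then the union w[a..d] has a border of length b - c + 1 and hence has period d - a - b + c, which is twice the distance between the two palindromes' centres. -/
import Mathlib


/-- Two palindromic factors `w[a..b]` and `w[c..d]` with `(a+b)/2 < (c+d)/2`,
intersecting (`a ≤ c ≤ b ≤ d`), neither a proper factor of the other.  Then the
union `w[a..d]` has a border of length `b - c + 1` (its prefix `w[a..a+(b-c)]`
equals its suffix `w[c+d-b..d]`) and hence has period `(c+d) - (a+b)`, twice the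
distance between the centres. -/
theorem stmt_11 {α : Type*} (w : ℕ → α) (a b c d : ℕ)
    (hpal1 : ∀ i j, a ≤ i → a ≤ j → i + j = a + b → w i = w j)
    (hpal2 : ∀ i j, c ≤ i → c ≤ j → i + j = c + d → w i = w j)
    (hcent : a + b < c + d)
    (hac : a ≤ c) (hcb : c ≤ b) (hbd : b ≤ d) :
    (∀ t ≤ b - c, w (a + t) = w (c + d - b + t)) ∧
    (∀ i, a ≤ i → i + ((c + d) - (a + b)) ≤ d →
      w i = w (i + ((c + d) - (a + b)))) := by
  constructor
  · intro t ht
    have h1 : w (a + t) = w (b - t) := hpal1 _ _ (by omega) (by omega) (by omega)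
    have h2 : w (b - t) = w (c + d - b + t) := hpal2 _ _ (by omega) (by omega) (by omega)
    exact h1.trans h2
  · intro i hai hid
    have h1 : w i = w (a + b - i) := hpal1 _ _ hai (by omega) (by omega)
    have h2 : w (a + b - i) = w (i + ((c + d) - (a + b))) :=
      hpal2 _ _ (by omega) (by omega) (by omega)
    exact h1.trans h2
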